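/- If A and B are closed under stuttering, then ◇(↑A ∧ B) is closed under stuttering, where ↑A := ¬A ∧ ○A. -/
import Mathlib


def State := String → Bool

def StSeq := ℕ → State

def drop (k : ℕ) (s : StSeq) : StSeq := fun n => s (k + n)

def stutter (s : StSeq) (i : ℕ) : StSeq := fun n => if n ≤ i then s n else s (n - 1)

def CUS (F : StSeq → Prop) : Prop := ∀ (s : StSeq) (i : ℕ), F s ↔ F (stutter s i)

def Var (a : String) : StSeq → Prop := fun s => s 0 a = true

def Not' (F : StSeq → Prop) : StSeq → Prop := fun s => ¬ F s

def And' (F G : StSeq → Prop) : StSeq → Prop := fun s => F s ∧ G s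

def Or' (F G : StSeq → Prop) : StSeq → Prop := fun s => F s ∨ G s

def Imp' (F G : StSeq → Prop) : StSeq → Prop := fun s => F s → G s

def Iff' (F G : StSeq → Prop) : StSeq → Prop := fun s => F s ↔ G s

def Next (F : StSeq → Prop) : StSeq → Prop := fun s => F (drop 1 s)

def Always (F : StSeq → Prop) : StSeq → Prop := fun s => ∀ k, F (drop k s)

def Ev (F : StSeq → Prop) : StSeq → Prop := fun s => ∃ k, F (drop k s)

def Until' (F G : StSeq → Prop) : StSeq → Prop :=
  fun s => ∃ k, G (drop k s) ∧ ∀ j < k, F (drop j s)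

def Up (F : StSeq → Prop) : StSeq → Prop := And' (Not' F) (Next F)

def Down (F : StSeq → Prop) : StSeq → Prop := And' F (Next (Not' F))

def AnyEdge (F : StSeq → Prop) : StSeq → Prop := Or' (Up F) (Down F)

lemma drop_drop (a b : ℕ) (s : StSeq) : drop a (drop b s) = drop (a + b) s := by
  funext n; show s (b + (a + n)) = s (a + b + n)
  have h : b + (a + n) = a + b + n := by omega
  rw [h]

lemma drop_stutter_le {k i : ℕ} (s : StSeq) (h : k ≤ i) :
    drop k (stutter s i) = stutter (drop k s) (i - k) := by
  funext n
  show (if k + n ≤ i then s (k+n) else s (k+n-1)) = if n ≤ i - k then s (k+n) else s (k + (n-1))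
  by_cases hn : n ≤ i - k
  · rw [if_pos (by omega), if_pos hn]
  · rw [if_neg (by omega), if_neg hn]
    have h2 : k + n - 1 = k + (n - 1) := by omega
    rw [h2]

lemma drop_stutter_gt {k i : ℕ} (s : StSeq) (h : i < k) :
    drop k (stutter s i) = drop (k - 1) s := by
  funext n
  show (if k + n ≤ i then s (k+n) else s (k+n-1)) = s (k - 1 + n)
  rw [if_neg (by omega)]
  have h2 : k + n - 1 = k - 1 + n := by omega
  rw [h2]

theorem prop1_simple1 (A B : StSeq → Prop) (hA : CUS A) (hB : CUS B) :
    CUS (Ev (And' (Up A) B)) := by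
  intro s i
  constructor
  · rintro ⟨k, ⟨hnA, hNA⟩, hBk⟩
    simp only [Next, drop_drop] at hNA
    rw [(by omega : 1 + k = k + 1)] at hNA
    by_cases hk : k < i
    · refine ⟨k, ⟨?_, ?_⟩, ?_⟩
      · rw [drop_stutter_le s (le_of_lt hk)]
        exact fun h => hnA ((hA _ _).mpr h)
      · show A (drop 1 (drop k (stutter s i)))
        rw [drop_drop, (by omega : 1 + k = k + 1), drop_stutter_le s (by omega : k + 1 ≤ i)]
        exact (hA _ _).mp hNA
      · rw [drop_stutter_le s (le_of_lt hk)]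
        exact (hB _ _).mp hBk
    · refine ⟨k + 1, ⟨?_, ?_⟩, ?_⟩
      · rw [drop_stutter_gt s (by omega : i < k + 1)]
        simpa using hnA
      · show A (drop 1 (drop (k + 1) (stutter s i)))
        rw [drop_drop, (by omega : 1 + (k + 1) = k + 2), drop_stutter_gt s (by omega : i < k + 2),
          (by omega : k + 2 - 1 = k + 1)]
        exact hNA
      · rw [drop_stutter_gt s (by omega : i < k + 1)]
        simpa using hBk
  · rintro ⟨k, ⟨hnA, hNA⟩, hBk⟩
    simp only [Next, drop_drop] at hNA
    rw [(by omega : 1 + k = k + 1)] at hNA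
    by_cases hk : k ≤ i
    · rcases eq_or_lt_of_le hk with rfl | hk'
      · exfalso
        rw [drop_stutter_le s le_rfl] at hnA
        rw [drop_stutter_gt s (by omega : k < k + 1), (by omega : k + 1 - 1 = k)] at hNA
        exact hnA ((hA _ _).mp hNA)
      · refine ⟨k, ⟨?_, ?_⟩, ?_⟩
        · rw [drop_stutter_le s hk] at hnA
          exact fun h => hnA ((hA _ _).mp h)
        · show A (drop 1 (drop k s))
          rw [drop_stutter_le s (by omega : k + 1 ≤ i)] at hNA
          rw [drop_drop, (by omega : 1 + k = k + 1)]
          exact (hA _ _).mpr hNA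
        · rw [drop_stutter_le s hk] at hBk
          exact (hB _ _).mpr hBk
    · refine ⟨k - 1, ⟨?_, ?_⟩, ?_⟩
      · rw [drop_stutter_gt s (by omega : i < k)] at hnA
        exact hnA
      · show A (drop 1 (drop (k - 1) s))
        rw [drop_stutter_gt s (by omega : i < k + 1), (by omega : k + 1 - 1 = k)] at hNA
        rw [drop_drop, (by omega : 1 + (k - 1) = k)]
        exact hNA
      · rw [drop_stutter_gt s (by omega : i < k)] at hBk
        exact hBk
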